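/- arXiv:1707.01659 — 4 statements merged into one kernel-verified Lean document; each statement's English description precedes it below -/
import Mathlib

section
/- Let ε : ℕ → ℝⁿ satisfy ε(k) = A(k)·ε(k-1) + d(k), where each A(k) belongs to a finite set 𝒜 of matrices, and suppose there exist symmetric positive definite matrices P₁, P₂ such that for every A ∈ 𝒜 with A ≠ A₀ (a distinguished element) we have Aᵀ P₁ A - P₁ < 0 and Aᵀ P₁ A - P₂ < 0, while A₀ᵀ P₂ A₀ - P₂ < 0 and A₀ᵀ P₂ A₀ - P₁ < 0. Then there exist constants c₁ > 0, 0 < ρ < 1, c₂ > 0 such that |ε(k)| ≤ c₁·ρᵏ·|ε(0)| + c₂·∑_{l=0}^{k-1} ρˡ·|d(k-l)| for all k, i.e., the switched system is input-to-state stable. -/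
open Matrix
noncomputable def qf {n : ℕ} (Q : Matrix (Fin n) (Fin n) ℝ) (x : EuclideanSpace ℝ (Fin n)) : ℝ :=
  dotProduct (WithLp.equiv 2 _ x) (Q *ᵥ (WithLp.equiv 2 _ x))

lemma qf_inner {n : ℕ} (Q : Matrix (Fin n) (Fin n) ℝ) (x : EuclideanSpace ℝ (Fin n)) :
    qf Q x = inner ℝ x (Q.toEuclideanLin x) := by
  simp [qf, PiLp.inner_apply, dotProduct, RCLike.inner_apply, toEuclideanLin_apply, mul_comm]

lemma qf_continuous {n : ℕ} (Q : Matrix (Fin n) (Fin n) ℝ) : Continuous (qf Q) := by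
  simp only [funext (qf_inner Q)]
  exact (continuous_id.inner ((Matrix.toEuclideanLin Q).toContinuousLinearMap.continuous))

lemma qf_smul {n : ℕ} (Q : Matrix (Fin n) (Fin n) ℝ) (c : ℝ) (x : EuclideanSpace ℝ (Fin n)) :
    qf Q (c • x) = c^2 * qf Q x := by
  simp [qf_inner, inner_smul_left, inner_smul_right, _root_.map_smul]; ring

lemma qf_nonneg {n : ℕ} {R : Matrix (Fin n) (Fin n) ℝ} (hR : R.PosSemidef)
    (x : EuclideanSpace ℝ (Fin n)) : 0 ≤ qf R x := by
  simpa [qf] using hR.dotProduct_mulVec_nonneg (WithLp.equiv 2 _ x)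

lemma qf_pos {n : ℕ} {R : Matrix (Fin n) (Fin n) ℝ} (hR : R.PosDef)
    {x : EuclideanSpace ℝ (Fin n)} (hx : x ≠ 0) : 0 < qf R x := by
  have hx' : (WithLp.equiv 2 (Fin n → ℝ)) x ≠ 0 := by
    simpa using hx
  simpa [qf] using hR.dotProduct_mulVec_pos hx' 

lemma qf_lower {n : ℕ} {R : Matrix (Fin n) (Fin n) ℝ} (hR : R.PosDef) :
    ∃ m > (0:ℝ), ∀ x : EuclideanSpace ℝ (Fin n), m * ‖x‖^2 ≤ qf R x := by
  rcases Nat.eq_zero_or_pos n with hn | hn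
  · refine ⟨1, one_pos, fun x => ?_⟩
    subst hn
    have : x = 0 := Subsingleton.elim x 0
    simp [this, qf]
  · obtain ⟨x₀, hx₀s, hmin⟩ := (isCompact_sphere (0 : EuclideanSpace ℝ (Fin n)) 1).exists_isMinOn
      ⟨EuclideanSpace.single ⟨0, hn⟩ (1:ℝ), by simp [mem_sphere_iff_norm]⟩
      (qf_continuous R).continuousOn
    have hx₀ : x₀ ≠ 0 := by
      have : ‖x₀‖ = 1 := mem_sphere_zero_iff_norm.mp hx₀s
      intro h; rw [h] at this; simp at this
    refine ⟨qf R x₀, qf_pos hR hx₀, fun x => ?_⟩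
    rcases eq_or_ne x 0 with rfl | hx
    · simp [qf]
    · have hnx : ‖x‖ ≠ 0 := norm_ne_zero_iff.mpr hx
      have hu : (‖x‖⁻¹ • x) ∈ Metric.sphere (0 : EuclideanSpace ℝ (Fin n)) 1 := by
        simp [mem_sphere_zero_iff_norm, norm_smul, abs_of_nonneg (inv_nonneg.mpr (norm_nonneg x)),
          inv_mul_cancel₀ hnx]
      have h1 := hmin hu
      have h2 : qf R x = ‖x‖^2 * qf R (‖x‖⁻¹ • x) := by
        rw [qf_smul]
        field_simp
      rw [h2]
      have := mul_le_mul_of_nonneg_left h1 (sq_nonneg ‖x‖)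
      linarith [this]

lemma qf_upper {n : ℕ} (Q : Matrix (Fin n) (Fin n) ℝ) :
    ∃ M > (0:ℝ), ∀ x : EuclideanSpace ℝ (Fin n), qf Q x ≤ M * ‖x‖^2 := by
  set f := (Matrix.toEuclideanLin Q).toContinuousLinearMap with hf
  refine ⟨‖f‖ + 1, by positivity, fun x => ?_⟩
  have h1 : qf Q x = inner ℝ x (f x) := qf_inner Q x
  calc qf Q x = inner ℝ x (f x) := h1
    _ ≤ ‖x‖ * ‖f x‖ := real_inner_le_norm _ _
    _ ≤ ‖x‖ * (‖f‖ * ‖x‖) := by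
        gcongr; exact f.le_opNorm x
    _ ≤ (‖f‖ + 1) * ‖x‖^2 := by nlinarith [norm_nonneg x, norm_nonneg f, sq_nonneg ‖x‖]

lemma qf_add {n : ℕ} (Q : Matrix (Fin n) (Fin n) ℝ) (x y : EuclideanSpace ℝ (Fin n)) :
    qf Q (x + y) = qf Q x + (inner ℝ x (Q.toEuclideanLin y) + inner ℝ y (Q.toEuclideanLin x)) + qf Q y := by
  simp [qf_inner, map_add, inner_add_left, inner_add_right]; ring

lemma qf_sqrt_triangle {n : ℕ} {Q : Matrix (Fin n) (Fin n) ℝ} (hQ : Q.PosSemidef)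
    (x y : EuclideanSpace ℝ (Fin n)) :
    Real.sqrt (qf Q (x + y)) ≤ Real.sqrt (qf Q x) + Real.sqrt (qf Q y) := by
  set b : ℝ := inner ℝ x (Q.toEuclideanLin y) + inner ℝ y (Q.toEuclideanLin x) with hb
  have hx := qf_nonneg hQ x
  have hy := qf_nonneg hQ y
  have hdisc : discrim (qf Q y) b (qf Q x) ≤ 0 := by
    apply discrim_le_zero
    intro t
    have h0 := qf_nonneg hQ (x + t • y)
    have : qf Q (x + t • y) = qf Q y * (t * t) + b * t + qf Q x := by
      rw [qf_add, qf_smul]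
      simp [hb, inner_smul_left, inner_smul_right, _root_.map_smul]
      ring
    linarith [this ▸ h0]
  rw [discrim] at hdisc
  have hble : b ≤ 2 * (Real.sqrt (qf Q x) * Real.sqrt (qf Q y)) := by
    have h1 : b ≤ |b| := le_abs_self b
    have h2 : |b| = Real.sqrt (b^2) := (Real.sqrt_sq_eq_abs b).symm
    have h3 : (b:ℝ)^2 ≤ 4 * (qf Q x * qf Q y) := by nlinarith
    calc b ≤ Real.sqrt (b^2) := h2 ▸ h1
      _ ≤ Real.sqrt (4 * (qf Q x * qf Q y)) := Real.sqrt_le_sqrt h3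
      _ = 2 * (Real.sqrt (qf Q x) * Real.sqrt (qf Q y)) := by
          rw [show (4:ℝ) * (qf Q x * qf Q y) = (2:ℝ)^2 * (qf Q x * qf Q y) by ring,
            Real.sqrt_mul (by positivity), Real.sqrt_sq (by norm_num), Real.sqrt_mul hx]
  have hkey : qf Q (x + y) ≤ (Real.sqrt (qf Q x) + Real.sqrt (qf Q y))^2 := by
    rw [qf_add, ← hb]
    have sx : Real.sqrt (qf Q x) ^ 2 = qf Q x := Real.sq_sqrt hx
    have sy : Real.sqrt (qf Q y) ^ 2 = qf Q y := Real.sq_sqrt hy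
    nlinarith [Real.sqrt_nonneg (qf Q x), Real.sqrt_nonneg (qf Q y)]
  calc Real.sqrt (qf Q (x + y)) ≤ Real.sqrt ((Real.sqrt (qf Q x) + Real.sqrt (qf Q y))^2) :=
        Real.sqrt_le_sqrt hkey
    _ = Real.sqrt (qf Q x) + Real.sqrt (qf Q y) := Real.sqrt_sq (by positivity)

lemma qf_map {n : ℕ} (Q B : Matrix (Fin n) (Fin n) ℝ) (x : EuclideanSpace ℝ (Fin n)) :
    qf Q (B.toEuclideanLin x) = qf (Bᵀ * Q * B) x := by
  simp only [qf, WithLp.equiv_apply, ofLp_toEuclideanLin_apply, Matrix.mul_assoc, ← mulVec_mulVec,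
    dotProduct_mulVec, vecMul_transpose]

lemma qf_sub {n : ℕ} (Q R : Matrix (Fin n) (Fin n) ℝ) (x : EuclideanSpace ℝ (Fin n)) :
    qf (Q - R) x = qf Q x - qf R x := by
  simp [qf, sub_mulVec, dotProduct_sub]

lemma contr {n : ℕ} {B Q Q' : Matrix (Fin n) (Fin n) ℝ} (hQpsd : Q.PosSemidef)
    (hdiff : (Q' - Bᵀ * Q * B).PosDef) :
    ∃ lam : ℝ, 1/2 ≤ lam ∧ lam < 1 ∧
      ∀ x : EuclideanSpace ℝ (Fin n), qf Q (B.toEuclideanLin x) ≤ lam * qf Q' x := by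
  obtain ⟨m, hm, hml⟩ := qf_lower hdiff
  obtain ⟨M, hM, hMu⟩ := qf_upper Q'
  refine ⟨max (1 - m/M) (1/2), le_max_right _ _, ?_, fun x => ?_⟩
  · apply max_lt _ (by norm_num)
    have : 0 < m / M := div_pos hm hM
    linarith
  · have h1 := hml x
    rw [qf_sub] at h1
    rw [qf_map]
    have h2 := hMu x
    have h3 : 0 ≤ qf (Bᵀ * Q * B) x := by
      rw [← qf_map]; exact qf_nonneg hQpsd _
    have hq' : 0 ≤ qf Q' x := by nlinarith [sq_nonneg ‖x‖]
    have key : qf (Bᵀ * Q * B) x ≤ (1 - m/M) * qf Q' x := by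
      have : m / M * qf Q' x ≤ m * ‖x‖^2 := by
        rw [div_mul_eq_mul_div, div_le_iff₀ hM]
        nlinarith
      linarith
    calc qf (Bᵀ * Q * B) x ≤ (1 - m/M) * qf Q' x := key
      _ ≤ max (1 - m/M) (1/2) * qf Q' x :=
          mul_le_mul_of_nonneg_right (le_max_left _ _) hq'

theorem stmt_1 {n : ℕ}
    (𝒜 : Finset (Matrix (Fin n) (Fin n) ℝ)) (A₀ : Matrix (Fin n) (Fin n) ℝ)
    (hA₀ : A₀ ∈ 𝒜)
    (P₁ P₂ : Matrix (Fin n) (Fin n) ℝ) (hP₁ : P₁.PosDef) (hP₂ : P₂.PosDef)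
    (hlmi : ∀ A ∈ 𝒜, A ≠ A₀ →
      (P₁ - Aᵀ * P₁ * A).PosDef ∧ (P₂ - Aᵀ * P₁ * A).PosDef)
    (hlmi₀ : (P₂ - A₀ᵀ * P₂ * A₀).PosDef ∧ (P₁ - A₀ᵀ * P₂ * A₀).PosDef)
    (A : ℕ → Matrix (Fin n) (Fin n) ℝ) (hA : ∀ k, A k ∈ 𝒜)
    (ε d : ℕ → EuclideanSpace ℝ (Fin n))
    (hrec : ∀ k, 1 ≤ k → ε k = (A k).toEuclideanLin (ε (k - 1)) + d k) :
    ∃ c₁ > (0 : ℝ), ∃ ρ : ℝ, 0 < ρ ∧ ρ < 1 ∧ ∃ c₂ > (0 : ℝ),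
      ∀ k, ‖ε k‖ ≤ c₁ * ρ ^ k * ‖ε 0‖ +
        c₂ * ∑ l ∈ Finset.range k, ρ ^ l * ‖d (k - l)‖ := by
  classical
  -- the switching Lyapunov matrix
  set Qsel : Matrix (Fin n) (Fin n) ℝ → Matrix (Fin n) (Fin n) ℝ :=
    fun B => if B = A₀ then P₂ else P₁ with hQsel
  have hQselPD : ∀ B, (Qsel B).PosDef := by
    intro B; by_cases h : B = A₀ <;> simp [hQsel, h, hP₁, hP₂]
  have hstep : ∀ B ∈ 𝒜, (P₁ - Bᵀ * Qsel B * B).PosDef ∧ (P₂ - Bᵀ * Qsel B * B).PosDef := by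
    intro B hB
    by_cases h : B = A₀
    · subst h; simp only [hQsel, if_pos rfl]; exact ⟨hlmi₀.2, hlmi₀.1⟩
    · simp only [hQsel, if_neg h]; exact ⟨(hlmi B hB h).1, (hlmi B hB h).2⟩
  -- per-matrix contraction factor
  have hc : ∀ B : Matrix (Fin n) (Fin n) ℝ, ∃ lam : ℝ, 1/2 ≤ lam ∧ lam < 1 ∧
      (B ∈ 𝒜 → ∀ x : EuclideanSpace ℝ (Fin n),
        qf (Qsel B) (B.toEuclideanLin x) ≤ lam * qf P₁ x ∧
        qf (Qsel B) (B.toEuclideanLin x) ≤ lam * qf P₂ x) := by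
    intro B
    by_cases hB : B ∈ 𝒜
    · obtain ⟨l1, hl1h, hl1lt, hl1⟩ := contr (hQselPD B).posSemidef (hstep B hB).1
      obtain ⟨l2, hl2h, hl2lt, hl2⟩ := contr (hQselPD B).posSemidef (hstep B hB).2
      refine ⟨max l1 l2, le_trans hl1h (le_max_left _ _), max_lt hl1lt hl2lt, fun _ x => ?_⟩
      constructor
      · exact le_trans (hl1 x) (mul_le_mul_of_nonneg_right (le_max_left _ _)
          (qf_nonneg hP₁.posSemidef x))
      · exact le_trans (hl2 x) (mul_le_mul_of_nonneg_right (le_max_right _ _)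
          (qf_nonneg hP₂.posSemidef x))
    · exact ⟨1/2, le_refl _, by norm_num, fun h => absurd h hB⟩
  choose lamf hlamf1 hlamf2 hlamf3 using hc
  set lam : ℝ := 𝒜.sup' ⟨A₀, hA₀⟩ lamf with hlamdef
  have hlam0 : 1/2 ≤ lam := le_trans (hlamf1 A₀) (Finset.le_sup' lamf hA₀)
  have hlam1 : lam < 1 := by
    rw [hlamdef]; refine (Finset.sup'_lt_iff (f := lamf) _).2 ?_
    intro B hB; exact hlamf2 B
  -- uniform bounds
  obtain ⟨m₁, hm₁, hm₁l⟩ := qf_lower hP₁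
  obtain ⟨m₂, hm₂, hm₂l⟩ := qf_lower hP₂
  obtain ⟨M₁, hM₁, hM₁u⟩ := qf_upper (n := n) P₁
  obtain ⟨M₂, hM₂, hM₂u⟩ := qf_upper (n := n) P₂
  set m : ℝ := min m₁ m₂ with hmdef
  set M : ℝ := max M₁ M₂ with hMdef
  have hm : 0 < m := lt_min hm₁ hm₂
  have hM : 0 < M := lt_of_lt_of_le hM₁ (le_max_left _ _)
  have hml : ∀ B x, m * ‖x‖^2 ≤ qf (Qsel B) x := by
    intro B x
    by_cases h : B = A₀ <;> simp only [hQsel, if_pos, if_neg, h]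
    · exact le_trans (mul_le_mul_of_nonneg_right (min_le_right _ _) (sq_nonneg _)) (hm₂l x)
    · exact le_trans (mul_le_mul_of_nonneg_right (min_le_left _ _) (sq_nonneg _)) (hm₁l x)
  have hMu : ∀ B x, qf (Qsel B) x ≤ M * ‖x‖^2 := by
    intro B x
    by_cases h : B = A₀ <;> simp only [hQsel, if_pos, if_neg, h]
    · exact le_trans (hM₂u x) (mul_le_mul_of_nonneg_right (le_max_right _ _) (sq_nonneg _))
    · exact le_trans (hM₁u x) (mul_le_mul_of_nonneg_right (le_max_left _ _) (sq_nonneg _))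
  -- the Lyapunov function
  set v : ℕ → ℝ := fun k => Real.sqrt (qf (Qsel (A k)) (ε k)) with hv
  set ρ : ℝ := Real.sqrt lam with hρ
  have hρ0 : 0 < ρ := Real.sqrt_pos.mpr (by linarith)
  have hρ1 : ρ < 1 := by
    rw [hρ, show (1:ℝ) = Real.sqrt 1 by simp]
    exact Real.sqrt_lt_sqrt (by linarith) hlam1
  -- one-step estimate
  have hstepv : ∀ k, 1 ≤ k → v k ≤ ρ * v (k-1) + Real.sqrt M * ‖d k‖ := by
    intro k hk
    have hεk : ε k = (A k).toEuclideanLin (ε (k - 1)) + d k := hrec k hk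
    have htri : v k ≤ Real.sqrt (qf (Qsel (A k)) ((A k).toEuclideanLin (ε (k-1)))) +
        Real.sqrt (qf (Qsel (A k)) (d k)) := by
      simp only [hv, hεk]
      exact qf_sqrt_triangle (hQselPD (A k)).posSemidef _ _
    have h1 : Real.sqrt (qf (Qsel (A k)) ((A k).toEuclideanLin (ε (k-1)))) ≤ ρ * v (k-1) := by
      have hb : qf (Qsel (A k)) ((A k).toEuclideanLin (ε (k-1))) ≤
          lam * qf (Qsel (A (k-1))) (ε (k-1)) := by
        have hle : lamf (A k) ≤ lam := Finset.le_sup' lamf (hA k)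
        have hq : 0 ≤ qf (Qsel (A (k-1))) (ε (k-1)) := qf_nonneg (hQselPD _).posSemidef _
        by_cases h : A (k-1) = A₀
        · have := (hlamf3 (A k) (hA k) (ε (k-1))).2
          rw [h]; simp only [hQsel, if_pos rfl]
          calc qf (Qsel (A k)) ((A k).toEuclideanLin (ε (k-1))) ≤ lamf (A k) * qf P₂ (ε (k-1)) := this
            _ ≤ lam * qf P₂ (ε (k-1)) := by
                apply mul_le_mul_of_nonneg_right hle (qf_nonneg hP₂.posSemidef _)
        · have := (hlamf3 (A k) (hA k) (ε (k-1))).1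
          simp only [hQsel, if_neg h]
          calc qf (Qsel (A k)) ((A k).toEuclideanLin (ε (k-1))) ≤ lamf (A k) * qf P₁ (ε (k-1)) := this
            _ ≤ lam * qf P₁ (ε (k-1)) := by
                apply mul_le_mul_of_nonneg_right hle (qf_nonneg hP₁.posSemidef _)
      calc Real.sqrt (qf (Qsel (A k)) ((A k).toEuclideanLin (ε (k-1))))
          ≤ Real.sqrt (lam * qf (Qsel (A (k-1))) (ε (k-1))) := Real.sqrt_le_sqrt hb
        _ = ρ * v (k-1) := by
            rw [hρ, hv, Real.sqrt_mul (by linarith)]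
    have h2 : Real.sqrt (qf (Qsel (A k)) (d k)) ≤ Real.sqrt M * ‖d k‖ := by
      calc Real.sqrt (qf (Qsel (A k)) (d k)) ≤ Real.sqrt (M * ‖d k‖^2) :=
            Real.sqrt_le_sqrt (hMu (A k) (d k))
        _ = Real.sqrt M * ‖d k‖ := by
            rw [Real.sqrt_mul hM.le, Real.sqrt_sq (norm_nonneg _)]
    linarith
  -- iterate
  have hiter : ∀ k, v k ≤ ρ^k * v 0 + Real.sqrt M * ∑ l ∈ Finset.range k, ρ^l * ‖d (k - l)‖ := by
    intro k
    induction k with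
    | zero => simp
    | succ k ih =>
      have h1 := hstepv (k+1) (Nat.le_add_left 1 k)
      simp only [Nat.add_sub_cancel] at h1
      have hsum : ∑ l ∈ Finset.range (k+1), ρ^l * ‖d (k+1-l)‖ =
          ρ * ∑ l ∈ Finset.range k, ρ^l * ‖d (k-l)‖ + ‖d (k+1)‖ := by
        rw [Finset.sum_range_succ']
        simp only [pow_succ, pow_zero, one_mul, Nat.succ_sub_succ]
        rw [Finset.mul_sum]
        congr 1
        · apply Finset.sum_congr rfl; intro i hi; ring
      rw [hsum]
      have := mul_le_mul_of_nonneg_left ih hρ0.le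
      calc v (k+1) ≤ ρ * v k + Real.sqrt M * ‖d (k+1)‖ := h1
        _ ≤ ρ * (ρ^k * v 0 + Real.sqrt M * ∑ l ∈ Finset.range k, ρ^l * ‖d (k-l)‖)
            + Real.sqrt M * ‖d (k+1)‖ := by linarith
        _ = ρ^(k+1) * v 0 + Real.sqrt M *
            (ρ * ∑ l ∈ Finset.range k, ρ^l * ‖d (k-l)‖ + ‖d (k+1)‖) := by ring
  -- translate back to Euclidean norms
  have hlow : ∀ k, Real.sqrt m * ‖ε k‖ ≤ v k := by
    intro k
    have := hml (A k) (ε k)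
    calc Real.sqrt m * ‖ε k‖ = Real.sqrt (m * ‖ε k‖^2) := by
          rw [Real.sqrt_mul hm.le, Real.sqrt_sq (norm_nonneg _)]
      _ ≤ v k := Real.sqrt_le_sqrt this
  have hhigh : v 0 ≤ Real.sqrt M * ‖ε 0‖ := by
    calc v 0 ≤ Real.sqrt (M * ‖ε 0‖^2) := Real.sqrt_le_sqrt (hMu (A 0) (ε 0))
      _ = Real.sqrt M * ‖ε 0‖ := by rw [Real.sqrt_mul hM.le, Real.sqrt_sq (norm_nonneg _)]
  have hsm : 0 < Real.sqrt m := Real.sqrt_pos.mpr hm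
  have hsM : 0 < Real.sqrt M := Real.sqrt_pos.mpr hM
  refine ⟨Real.sqrt M / Real.sqrt m, by positivity, ρ, hρ0, hρ1,
    Real.sqrt M / Real.sqrt m, by positivity, fun k => ?_⟩
  have h1 := hlow k
  have h2 := hiter k
  have h3 : ρ^k * v 0 ≤ ρ^k * (Real.sqrt M * ‖ε 0‖) :=
    mul_le_mul_of_nonneg_left hhigh (pow_nonneg hρ0.le k)
  have hε : ‖ε k‖ ≤ (ρ^k * (Real.sqrt M * ‖ε 0‖) +
      Real.sqrt M * ∑ l ∈ Finset.range k, ρ^l * ‖d (k - l)‖) / Real.sqrt m := by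
    rw [le_div_iff₀ hsm]
    calc ‖ε k‖ * Real.sqrt m = Real.sqrt m * ‖ε k‖ := by ring
      _ ≤ v k := h1
      _ ≤ _ := by linarith
  calc ‖ε k‖ ≤ _ := hε
    _ = Real.sqrt M / Real.sqrt m * ρ^k * ‖ε 0‖ +
        Real.sqrt M / Real.sqrt m * ∑ l ∈ Finset.range k, ρ^l * ‖d (k - l)‖ := by
      field_simp
end

section
/- Suppose H and P are symmetric matrices (H ∈ ℝ²ⁿˣ²ⁿ, P ∈ ℝⁿˣⁿ) with H ⪰ [[P, P·A₊],[A₊ᵀ·P, P]] ≻ 0, and for every m ∈ {1,…,N} the block matrix [[P, P·(I - Lₘ Cₘ)·A₊],[A₊ᵀ·(I - Lₘ Cₘ)ᵀ·P, P]] ≻ ((N-1)/N)·H. Then for every nonempty subset S ⊆ {1,…,N}, the block matrix [[P, P·A_cl(S)],[A_cl(S)ᵀ·P, P]] is positive definite, where A_cl(S) = (I - ∑_{m∈S} Lₘ Cₘ)·A₊. -/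
open Matrix

private lemma myFromBlocks_sum {ι l m' o p' α : Type*} [AddCommMonoid α]
    (S : Finset ι) (A : ι → Matrix l m' α) (B : ι → Matrix l p' α)
    (C : ι → Matrix o m' α) (D : ι → Matrix o p' α) :
    ∑ i ∈ S, Matrix.fromBlocks (A i) (B i) (C i) (D i)
      = Matrix.fromBlocks (∑ i ∈ S, A i) (∑ i ∈ S, B i) (∑ i ∈ S, C i) (∑ i ∈ S, D i) := by
  classical
  induction S using Finset.cons_induction with
  | empty => simp
  | cons a s ha ih => simp [Finset.sum_insert ha, ih, Matrix.fromBlocks_add]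

private lemma myFromBlocks_congr {l m' o p' α : Type*}
    {A A' : Matrix l m' α} {B B' : Matrix l p' α} {C C' : Matrix o m' α} {D D' : Matrix o p' α}
    (hA : A = A') (hB : B = B') (hC : C = C') (hD : D = D') :
    Matrix.fromBlocks A B C D = Matrix.fromBlocks A' B' C' D' := by
  rw [hA, hB, hC, hD]

private lemma myPosDef_add_psd {ι : Type*} [Fintype ι] {M N : Matrix ι ι ℝ}
    (hM : M.PosDef) (hN : N.PosSemidef) : (M + N).PosDef := by
  refine PosDef.of_dotProduct_mulVec_pos (hM.1.add hN.1) fun x hx => ?_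
  rw [add_mulVec, dotProduct_add]
  exact add_pos_of_pos_of_nonneg (hM.dotProduct_mulVec_pos hx) (hN.dotProduct_mulVec_nonneg x)

private lemma myPsd_smul {ι : Type*} [Fintype ι] {M : Matrix ι ι ℝ}
    (hM : M.PosSemidef) {c : ℝ} (hc : 0 ≤ c) : (c • M).PosSemidef := by
  refine PosSemidef.of_dotProduct_mulVec_nonneg ?_ fun x => ?_
  · rw [Matrix.IsHermitian, Matrix.conjTranspose_smul, hM.1.eq]
    simp
  · rw [smul_mulVec, dotProduct_smul]
    exact mul_nonneg hc (hM.dotProduct_mulVec_nonneg x)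

private lemma myPosDef_sum {ι κ : Type*} [Fintype ι] {S : Finset κ}
    (hS : S.Nonempty) {M : κ → Matrix ι ι ℝ} (hM : ∀ k, (M k).PosDef) :
    (∑ k ∈ S, M k).PosDef := by
  classical
  induction hS using Finset.Nonempty.cons_induction with
  | singleton a => simpa using hM a
  | cons a s ha hs ih =>
      rw [Finset.sum_cons]
      exact myPosDef_add_psd (hM a) ih.posSemidef

theorem stmt_4 {n N : ℕ} (hN : 1 ≤ N) (p : Fin N → ℕ)
    (Aplus : Matrix (Fin n) (Fin n) ℝ)
    (L : ∀ m : Fin N, Matrix (Fin n) (Fin (p m)) ℝ)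
    (C : ∀ m : Fin N, Matrix (Fin (p m)) (Fin n) ℝ)
    (P : Matrix (Fin n) (Fin n) ℝ)
    (H : Matrix (Fin n ⊕ Fin n) (Fin n ⊕ Fin n) ℝ) (hH : H.IsHermitian)
    (h1 : (H - Matrix.fromBlocks P (P * Aplus) (Aplusᵀ * P) P).PosSemidef)
    (h2 : (Matrix.fromBlocks P (P * Aplus) (Aplusᵀ * P) P).PosDef)
    (h3 : ∀ m : Fin N,
      (Matrix.fromBlocks P (P * (1 - L m * C m) * Aplus)
          (Aplusᵀ * (1 - L m * C m)ᵀ * P) P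
        - (((N : ℝ) - 1) / N) • H).PosDef) :
    ∀ S : Finset (Fin N), S.Nonempty →
      (Matrix.fromBlocks P (P * ((1 - ∑ m ∈ S, L m * C m) * Aplus))
        (((1 - ∑ m ∈ S, L m * C m) * Aplus)ᵀ * P) P).PosDef := by
  intro S hS
  have hNpos : (0:ℝ) < N := by exact_mod_cast hN
  set c : ℝ := ((N : ℝ) - 1) / N with hc
  set M0 : Matrix (Fin n ⊕ Fin n) (Fin n ⊕ Fin n) ℝ :=
    Matrix.fromBlocks P (P * Aplus) (Aplusᵀ * P) P with hM0
  set Mm : Fin N → Matrix (Fin n ⊕ Fin n) (Fin n ⊕ Fin n) ℝ := fun m =>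
    Matrix.fromBlocks P (P * (1 - L m * C m) * Aplus)
      (Aplusᵀ * (1 - L m * C m)ᵀ * P) P with hMm
  set k : ℝ := (S.card : ℝ) with hk
  have hk1 : (1:ℝ) ≤ k := by
    rw [hk]
    exact_mod_cast Finset.card_pos.mpr hS
  have hkN : k ≤ (N:ℝ) := by
    rw [hk]
    have := S.card_le_univ
    simp only [Finset.card_univ, Fintype.card_fin] at this
    exact_mod_cast this
  have hcoef : ((N:ℝ) - k)/N = 1 - k + k * c := by
    rw [hc]; field_simp; ring
  -- the sum of the Mm's, blockwise
  have hMsum : ∑ m ∈ S, Mm m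
      = Matrix.fromBlocks (k • P)
          (k • (P * Aplus) - P * (∑ m ∈ S, L m * C m) * Aplus)
          (k • (Aplusᵀ * P) - Aplusᵀ * (∑ m ∈ S, L m * C m)ᵀ * P) (k • P) := by
    rw [hMm, myFromBlocks_sum]
    have hTR : ∑ m ∈ S, P * (1 - L m * C m) * Aplus
        = k • (P * Aplus) - P * (∑ m ∈ S, L m * C m) * Aplus := by
      have step : ∀ m ∈ S, P * (1 - L m * C m) * Aplus
          = P * Aplus - P * (L m * C m) * Aplus := fun m _ => by
        rw [Matrix.mul_sub, Matrix.mul_one, Matrix.sub_mul]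
      rw [Finset.sum_congr rfl step, Finset.sum_sub_distrib, Finset.sum_const, Matrix.mul_sum, Finset.sum_mul, hk,
        Nat.cast_smul_eq_nsmul]
    have hBL : ∑ m ∈ S, Aplusᵀ * (1 - L m * C m)ᵀ * P
        = k • (Aplusᵀ * P) - Aplusᵀ * (∑ m ∈ S, L m * C m)ᵀ * P := by
      have step : ∀ m ∈ S, Aplusᵀ * (1 - L m * C m)ᵀ * P
          = Aplusᵀ * P - Aplusᵀ * (L m * C m)ᵀ * P := fun m _ => by
        rw [Matrix.transpose_sub, Matrix.transpose_one, Matrix.mul_sub, Matrix.mul_one,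
          Matrix.sub_mul]
      rw [Finset.sum_congr rfl step, Finset.sum_sub_distrib, Finset.sum_const, Matrix.transpose_sum, Matrix.mul_sum,
        Finset.sum_mul, hk, Nat.cast_smul_eq_nsmul]
    rw [hTR, hBL]
    congr 1 <;> simp [Finset.sum_const, hk, Nat.cast_smul_eq_nsmul]
  -- key matrix identity
  have key : Matrix.fromBlocks P (P * ((1 - ∑ m ∈ S, L m * C m) * Aplus))
        (((1 - ∑ m ∈ S, L m * C m) * Aplus)ᵀ * P) P
      = (∑ m ∈ S, (Mm m - c • H)) + (k * c) • (H - M0) + (((N:ℝ) - k)/N) • M0 := by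
    have hsum : ∑ m ∈ S, (Mm m - c • H) = (∑ m ∈ S, Mm m) - (k * c) • H := by
      rw [Finset.sum_sub_distrib, Finset.sum_const, hk, mul_smul, Nat.cast_smul_eq_nsmul]
    have collapse : ((∑ m ∈ S, Mm m) - (k * c) • H) + (k * c) • (H - M0)
        + (1 - k + k * c) • M0 = (∑ m ∈ S, Mm m) + (1 - k) • M0 := by
      module
    rw [hsum, hcoef, collapse, hMsum, hM0, Matrix.fromBlocks_smul, Matrix.fromBlocks_add]
    refine myFromBlocks_congr ?_ ?_ ?_ ?_
    · module
    · rw [sub_mul, one_mul, mul_sub, ← mul_assoc]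
      module
    · rw [Matrix.transpose_mul, Matrix.transpose_sub, Matrix.transpose_one, mul_sub,
        mul_one, sub_mul]
      module
    · module
  rw [key]
  refine myPosDef_add_psd (myPosDef_add_psd (myPosDef_sum hS fun m => h3 m) ?_) ?_
  · refine myPsd_smul h1 ?_
    have h0c : 0 ≤ c := by
      rw [hc]; exact div_nonneg (by linarith) (le_of_lt hNpos)
    exact mul_nonneg (by linarith) h0c
  · exact myPsd_smul h2.posSemidef (div_nonneg (by linarith) (le_of_lt hNpos))
end

section
/- Let e : ℕ → ℝⁿ evolve as e(k) = M·e(k-1) + d(k), where the disturbance d may be any bounded sequence. If M has an eigenvalue λ (possibly complex) with |λ| ≥ 1, then there exists a bounded disturbance sequence d and initial condition e(0) such that the resulting trajectory e(k) is unbounded. Hence the system is not input-to-state stable. -/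
open Matrix

theorem stmt_7 {n : ℕ} (M : Matrix (Fin n) (Fin n) ℝ)
    (hM : ∃ μ ∈ spectrum ℂ (M.map (Complex.ofReal)), 1 ≤ ‖μ‖) :
    ∃ d : ℕ → EuclideanSpace ℝ (Fin n), ∃ D : ℝ, (∀ k, ‖d k‖ ≤ D) ∧
      ∃ e : ℕ → EuclideanSpace ℝ (Fin n),
        (∀ k, 1 ≤ k → e k = M.toEuclideanLin (e (k - 1)) + d k) ∧
        ¬ ∃ B : ℝ, ∀ k, ‖e k‖ ≤ B := by
  classical
  obtain ⟨μ, hμspec, hμ⟩ := hM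
  set A := M.map (Complex.ofReal) with hA
  -- extract an eigenvector
  have hdet : (μ • (1 : Matrix (Fin n) (Fin n) ℂ) - A).det = 0 := by
    rw [spectrum.mem_iff] at hμspec
    by_contra h
    exact hμspec (by
      rw [Algebra.algebraMap_eq_smul_one]
      exact (Matrix.isUnit_iff_isUnit_det _).2 (isUnit_iff_ne_zero.2 h))
  obtain ⟨v, hv0, hv⟩ := (Matrix.exists_mulVec_eq_zero_iff).2 hdet
  have hAv : ∀ i, (∑ j, (M i j : ℂ) * v j) = μ * v i := by
    intro i
    have h1 : μ * v i - (A *ᵥ v) i = 0 := by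
      have := congrFun hv i
      simpa [Matrix.sub_mulVec, Matrix.smul_mulVec, Matrix.one_mulVec,
        Pi.sub_apply, Pi.smul_apply, smul_eq_mul] using this
    have h1' : (A *ᵥ v) i = μ * v i := by linear_combination -h1
    have h2 : A.mulVec v i = ∑ j, (M i j : ℂ) * v j := by
      simp [Matrix.mulVec, dotProduct, hA, Matrix.map_apply]
    rw [← h2, h1']
  -- the scalar sequence
  set r : ℝ := ‖μ‖ with hr
  have hr1 : (1 : ℝ) ≤ r := hμ
  have hr0 : (0 : ℝ) < r := lt_of_lt_of_le one_pos hr1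
  set s : ℕ → ℝ := fun k => ∑ j ∈ Finset.range k, r⁻¹ ^ (j + 1) with hs
  have hs_nonneg : ∀ k, 0 ≤ s k := fun k => Finset.sum_nonneg fun j _ => by positivity
  set ζ : ℕ → ℂ := fun k => μ ^ k * (s k : ℂ) with hζ
  set c : ℕ → ℂ := fun k => μ ^ k * ((r⁻¹ : ℝ) : ℂ) ^ k with hc
  have hζrec : ∀ k : ℕ, ζ (k + 1) = μ * ζ k + c (k + 1) := by
    intro k
    simp only [hζ, hc, hs, Finset.sum_range_succ]
    push_cast
    ring
  have hcnorm : ∀ k, ‖c k‖ = 1 := by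
    intro k
    simp only [hc, norm_mul, norm_pow, Complex.norm_real, Real.norm_eq_abs,
      abs_of_nonneg (le_of_lt (inv_pos.2 hr0)), ← hr]
    rw [← mul_pow, mul_inv_cancel₀ (ne_of_gt hr0), one_pow]
  have hζnorm : ∀ k : ℕ, (k : ℝ) ≤ ‖ζ k‖ := by
    intro k
    have h1 : ‖ζ k‖ = r ^ k * s k := by
      simp only [hζ, norm_mul, norm_pow, Complex.norm_real, Real.norm_eq_abs,
        abs_of_nonneg (hs_nonneg k), ← hr]
    have h2 : (k : ℝ) * r⁻¹ ^ k ≤ s k := by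
      have hterm : ∀ j ∈ Finset.range k, r⁻¹ ^ k ≤ r⁻¹ ^ (j + 1) := by
        intro j hj
        exact pow_le_pow_of_le_one (by positivity) (inv_le_one_of_one_le₀ hr1)
          (Nat.succ_le_of_lt (Finset.mem_range.1 hj))
      calc (k : ℝ) * r⁻¹ ^ k = ∑ _j ∈ Finset.range k, r⁻¹ ^ k := by
            simp [Finset.sum_const, nsmul_eq_mul]
        _ ≤ s k := Finset.sum_le_sum hterm
    calc (k : ℝ) = (k : ℝ) * (r⁻¹ ^ k * r ^ k) := by
          rw [← mul_pow, inv_mul_cancel₀ (ne_of_gt hr0), one_pow, mul_one]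
      _ = r ^ k * ((k : ℝ) * r⁻¹ ^ k) := by ring
      _ ≤ r ^ k * s k := by
          exact mul_le_mul_of_nonneg_left h2 (by positivity)
      _ = ‖ζ k‖ := h1.symm
  -- the trajectories
  set E : (ℂ →ₗ[ℝ] ℝ) → ℕ → EuclideanSpace ℝ (Fin n) :=
    fun f k => (WithLp.equiv 2 (Fin n → ℝ)).symm (fun i => f (ζ k * v i)) with hE
  set Dd : (ℂ →ₗ[ℝ] ℝ) → ℕ → EuclideanSpace ℝ (Fin n) :=
    fun f k => (WithLp.equiv 2 (Fin n → ℝ)).symm (fun i => f (c k * v i)) with hDd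
  have hEapp : ∀ f k i, E f k i = f (ζ k * v i) := fun _ _ _ => rfl
  have hDapp : ∀ f k i, Dd f k i = f (c k * v i) := fun _ _ _ => rfl
  -- recursion
  have hrec : ∀ f : ℂ →ₗ[ℝ] ℝ, ∀ k, 1 ≤ k →
      E f k = M.toEuclideanLin (E f (k - 1)) + Dd f k := by
    intro f k hk
    obtain ⟨m, rfl⟩ : ∃ m, k = m + 1 := ⟨k - 1, (Nat.succ_pred_eq_of_pos hk).symm⟩
    simp only [Nat.add_sub_cancel]
    refine PiLp.ext fun i => ?_
    have hML : (M.toEuclideanLin (E f m)) i = ∑ j, M i j * f (ζ m * v j) := by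
      simp [Matrix.toEuclideanLin_apply, Matrix.mulVec, dotProduct, hEapp]
    have hfc : ∀ (a : ℝ) (z : ℂ), f ((a : ℂ) * z) = a * f z := by
      intro a z
      rw [← Complex.real_smul, _root_.map_smul, smul_eq_mul]
    have hsum : ∑ j, M i j * f (ζ m * v j) = f (μ * ζ m * v i) := by
      have : ∑ j, M i j * f (ζ m * v j) = f (∑ j, (M i j : ℂ) * (ζ m * v j)) := by
        rw [map_sum]
        exact Finset.sum_congr rfl fun j _ => (hfc (M i j) (ζ m * v j)).symm
      rw [this]
      congr 1
      calc ∑ j, (M i j : ℂ) * (ζ m * v j) = ζ m * ∑ j, (M i j : ℂ) * v j := by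
            rw [Finset.mul_sum]; exact Finset.sum_congr rfl fun j _ => by ring
        _ = μ * ζ m * v i := by rw [hAv i]; ring
    show E f (m + 1) i = (M.toEuclideanLin (E f m)) i + Dd f (m + 1) i
    rw [hEapp, hDapp, hML, hsum, ← map_add]
    congr 1
    rw [hζrec m]
    ring
  -- norms
  have hnorm : ∀ x : EuclideanSpace ℝ (Fin n), ‖x‖ ^ 2 = ∑ i, (x i) ^ 2 := by
    intro x
    rw [EuclideanSpace.norm_eq, Real.sq_sqrt (by positivity)]
    simp [Real.norm_eq_abs, sq_abs]
  set S : ℝ := ∑ i, ‖v i‖ ^ 2 with hS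
  have hSpos : 0 < S := by
    obtain ⟨i, hi⟩ := Function.ne_iff.1 hv0
    exact Finset.sum_pos' (fun j _ => by positivity)
      ⟨i, Finset.mem_univ i, by
        have : 0 < ‖v i‖ := norm_pos_iff.2 (by simpa using hi)
        exact pow_pos this 2⟩
  have hDbound : ∀ (f : ℂ →ₗ[ℝ] ℝ), (∀ z, |f z| ≤ ‖z‖) →
      ∀ k, ‖Dd f k‖ ≤ Real.sqrt S := by
    intro f hf k
    rw [← Real.sqrt_sq (norm_nonneg _)]
    apply Real.sqrt_le_sqrt
    rw [hnorm]
    apply Finset.sum_le_sum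
    intro i _
    rw [hDapp]
    calc f (c k * v i) ^ 2 = |f (c k * v i)| ^ 2 := (sq_abs _).symm
      _ ≤ ‖c k * v i‖ ^ 2 := by
          exact pow_le_pow_left₀ (abs_nonneg _) (hf _) 2
      _ = ‖v i‖ ^ 2 := by
          rw [norm_mul, hcnorm k, one_mul]
  -- key identity
  have hkey : ∀ k, ‖E Complex.reLm k‖ ^ 2 + ‖E Complex.imLm k‖ ^ 2 = ‖ζ k‖ ^ 2 * S := by
    intro k
    rw [hnorm, hnorm, ← Finset.sum_add_distrib, hS, Finset.mul_sum]
    apply Finset.sum_congr rfl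
    intro i _
    rw [hEapp, hEapp]
    have h1 : (Complex.reLm (ζ k * v i)) ^ 2 + (Complex.imLm (ζ k * v i)) ^ 2
        = ‖ζ k * v i‖ ^ 2 := by
      rw [Complex.sq_norm, Complex.normSq_apply]
      simp [Complex.reLm, Complex.imLm, sq]
    rw [h1, norm_mul, mul_pow]
  -- main contradiction
  have main : ∀ B1 B2 : ℝ, (∀ k, ‖E Complex.reLm k‖ ≤ B1) →
      (∀ k, ‖E Complex.imLm k‖ ≤ B2) → False := by
    intro B1 B2 h1 h2
    obtain ⟨k, hk⟩ := exists_nat_gt ((B1 ^ 2 + B2 ^ 2) / S)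
    have hks : B1 ^ 2 + B2 ^ 2 < (k : ℝ) * S := by
      rwa [div_lt_iff₀ hSpos] at hk
    have hkk : (k : ℝ) ≤ ‖ζ k‖ ^ 2 := by
      calc (k : ℝ) ≤ (k : ℝ) ^ 2 := by
            rcases Nat.eq_zero_or_pos k with h | h
            · simp [h]
            · have : (1 : ℝ) ≤ (k : ℝ) := by exact_mod_cast h
              nlinarith
        _ ≤ ‖ζ k‖ ^ 2 := by
            have := hζnorm k
            nlinarith [norm_nonneg (ζ k), Nat.cast_nonneg (α := ℝ) k]
    have hb : ‖ζ k‖ ^ 2 * S ≤ B1 ^ 2 + B2 ^ 2 := by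
      rw [← hkey k]
      have e1 := pow_le_pow_left₀ (norm_nonneg _) (h1 k) 2
      have e2 := pow_le_pow_left₀ (norm_nonneg _) (h2 k) 2
      linarith
    have : (k : ℝ) * S ≤ ‖ζ k‖ ^ 2 * S :=
      mul_le_mul_of_nonneg_right hkk (le_of_lt hSpos)
    linarith
  -- conclude
  by_cases hb1 : ∃ B, ∀ k, ‖E Complex.reLm k‖ ≤ B
  · obtain ⟨B1, hB1⟩ := hb1
    refine ⟨Dd Complex.imLm, Real.sqrt S,
      hDbound Complex.imLm (fun z => Complex.abs_im_le_norm z),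
      E Complex.imLm, hrec Complex.imLm, ?_⟩
    rintro ⟨B2, hB2⟩
    exact main B1 B2 hB1 hB2
  · refine ⟨Dd Complex.reLm, Real.sqrt S,
      hDbound Complex.reLm (fun z => Complex.abs_re_le_norm z),
      E Complex.reLm, hrec Complex.reLm, hb1⟩
end

section
/- In the two-agent counterexample with A = diag(0.5, 2), B = [[0,1],[1,0]], C = I₂, F = [[0,-2],[0.1,0]], L = I₂: the closed-loop matrices A + BF = diag(0.6, 0) and (I - LC)·A = 0 are Schur stable, yet if agents share true inputs, the trajectory defined by x(k) = (0, 2ᵏ)ᵀ, x̂₁(k) = 0, x̂₂(k) = x(k), u(k) = F·x̂-based inputs never triggers communication (each agent's measurement prediction error stays below threshold 1) and x(k) is unbounded. Formally: the sequence x(k) = (0, 2ᵏ)ᵀ satisfies the closed-loop recursions with zero noise and communication thresholds Δ₁ = Δ₂ = 1, and |x(k)| → ∞. -/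
open Matrix Filter Topology

theorem stmt_18
    (A B F L C : Matrix (Fin 2) (Fin 2) ℝ)
    (hA : A = !![1/2, 0; 0, 2]) (hB : B = !![0, 1; 1, 0])
    (hF : F = !![0, -2; 1/10, 0]) (hL : L = 1) (hC : C = 1)
    (x xh1 xh2 u : ℕ → Fin 2 → ℝ)
    (hx : ∀ k, x k = ![0, 2 ^ k])
    (hxh1 : ∀ k, xh1 k = 0)
    (hxh2 : ∀ k, xh2 k = x k)
    (hu : ∀ k, u k = ![(F.mulVec (xh1 k)) 0, (F.mulVec (xh2 k)) 1]) :
    -- A + BF is Schur stable and (I - LC)A = 0 (hence Schur stable)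
    (A + B * F = !![3/5, 0; 0, 0]) ∧
    (∀ μ ∈ spectrum ℂ ((A + B * F).map (Complex.ofReal)), ‖μ‖ < 1) ∧
    ((1 - L * C) * A = 0) ∧
    -- the trajectory satisfies the closed-loop dynamics with zero noise
    (∀ k, 1 ≤ k → x k = A.mulVec (x (k - 1)) + B.mulVec (u (k - 1))) ∧
    -- with shared true inputs, both agents' measurement prediction errors stay
    -- below the thresholds Δ₁ = Δ₂ = 1 (no communication is ever triggered),
    -- and the no-communication estimator updates are satisfied
    (∀ k, 1 ≤ k →
      |x k 0 - (A.mulVec (xh1 (k - 1)) + B.mulVec (u (k - 1))) 0| < 1 ∧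
      |x k 1 - (A.mulVec (xh2 (k - 1)) + B.mulVec (u (k - 1))) 1| < 1 ∧
      xh1 k = A.mulVec (xh1 (k - 1)) + B.mulVec (u (k - 1)) ∧
      xh2 k = A.mulVec (xh2 (k - 1)) + B.mulVec (u (k - 1))) ∧
    -- yet the state is unbounded: |x(k)| → ∞
    Tendsto (fun k => Real.sqrt ((x k 0) ^ 2 + (x k 1) ^ 2)) atTop atTop := by
  subst hA hB hF hL hC
  have hABF : (!![1/2, 0; 0, 2] : Matrix (Fin 2) (Fin 2) ℝ) + !![0, 1; 1, 0] * !![0, -2; 1/10, 0]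
      = !![3/5, 0; 0, 0] := by
    ext i j; fin_cases i <;> fin_cases j <;>
      simp [Matrix.mul_apply, Fin.sum_univ_two] <;> norm_num
  have huz : ∀ k, u k = 0 := by
    intro k
    rw [hu, hxh1, hxh2, hx]
    funext i; fin_cases i <;>
      simp [Matrix.mulVec, dotProduct, Fin.sum_univ_two]
  refine ⟨hABF, ?_, ?_, ?_, ?_, ?_⟩
  · rw [hABF]
    have hdiag : (!![3/5, 0; 0, 0] : Matrix (Fin 2) (Fin 2) ℝ).map Complex.ofReal
        = Matrix.diagonal ![(3/5 : ℂ), 0] := by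
      ext i j; fin_cases i <;> fin_cases j <;> simp [Matrix.diagonal]
    rw [hdiag, spectrum_diagonal]
    rintro μ ⟨i, rfl⟩
    fin_cases i <;> simp <;> norm_num
  · ext i j; fin_cases i <;> fin_cases j <;>
      simp [Matrix.mul_apply, Fin.sum_univ_two, Matrix.one_apply]
  · intro k hk
    obtain ⟨n, rfl⟩ := Nat.exists_eq_add_of_le hk
    simp only [Nat.add_sub_cancel_left, huz, hx]
    funext i; fin_cases i <;>
      simp [Matrix.mulVec, dotProduct, Fin.sum_univ_two, pow_add] <;> ring
  · intro k hk
    obtain ⟨n, rfl⟩ := Nat.exists_eq_add_of_le hk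
    simp only [Nat.add_sub_cancel_left, huz, hx, hxh1, hxh2]
    refine ⟨?_, ?_, ?_, ?_⟩
    · simp [Matrix.mulVec, dotProduct, Fin.sum_univ_two]
    · have : (2:ℝ) * 2 ^ n - 2 ^ n * 2 = 0 := by ring
      simp [Matrix.mulVec, dotProduct, Fin.sum_univ_two, pow_add, this]
    · funext i; fin_cases i <;>
        simp [Matrix.mulVec, dotProduct, Fin.sum_univ_two]
    · funext i; fin_cases i <;>
        simp [Matrix.mulVec, dotProduct, Fin.sum_univ_two, pow_add] <;> ring
  · have : ∀ k, Real.sqrt ((x k 0) ^ 2 + (x k 1) ^ 2) = 2 ^ k := by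
      intro k
      rw [hx]
      simp only [Matrix.cons_val_zero, Matrix.cons_val_one, Matrix.head_cons]
      rw [show (0:ℝ)^2 + (2^k)^2 = (2^k)^2 by ring]
      exact Real.sqrt_sq (by positivity)
    simp only [this]
    exact tendsto_pow_atTop_atTop_of_one_lt (by norm_num)
end
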